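/- arXiv:math/9808131 — 3 statements merged into one kernel-verified Lean document; each statement's English description precedes it below -/
import Mathlib

section
/- Let W = [[z₁, z₂],[z₃, z₄]] be a 2×2 block complex matrix which is a partial isometry, and let ε < 1/16. If ‖z₂‖ ≤ ε and ‖z₃‖ ≤ ε, then the diagonal block z₁ is 16ε-close to a partial isometry. -/
open Matrix
open scoped Matrix.Norms.L2Operator

lemma matrix_norm_one_le (n : Type*) [Fintype n] [DecidableEq n] :
    ‖(1 : Matrix n n ℂ)‖ ≤ 1 := by
  rw [Matrix.cstar_norm_def, _root_.map_one]
  exact ContinuousLinearMap.norm_id_le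

lemma matrix_norm_le_of_sq_le {k l : Type*} [Fintype k] [Fintype l] [DecidableEq k] [DecidableEq l]
    {A : Matrix k l ℂ} {c : ℝ} (hc : 0 ≤ c) (h : ‖Aᴴ * A‖ ≤ c ^ 2) : ‖A‖ ≤ c := by
  have h1 := Matrix.l2_opNorm_conjTranspose_mul_self A
  nlinarith [norm_nonneg A]

lemma matrix_norm_mul3_le {a b c d : Type*} [Fintype a] [Fintype b] [Fintype c] [Fintype d]
    [DecidableEq b] [DecidableEq c] [DecidableEq d]
    (A : Matrix a b ℂ) (B : Matrix b c ℂ) (C : Matrix c d ℂ) :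
    ‖A * B * C‖ ≤ ‖A‖ * ‖B‖ * ‖C‖ :=
  (Matrix.l2_opNorm_mul _ _).trans
    (mul_le_mul_of_nonneg_right (Matrix.l2_opNorm_mul A B) (norm_nonneg C))

lemma matrix_diag_norm_le {n : Type*} [Fintype n] [DecidableEq n] (v : n → ℂ) {c : ℝ}
    (hc : 0 ≤ c) (h : ∀ i, ‖v i‖ ≤ c) : ‖Matrix.diagonal v‖ ≤ c := by
  rw [Matrix.l2_opNorm_def]
  refine ContinuousLinearMap.opNorm_le_bound _ hc fun x => ?_
  have hval : (((Matrix.toEuclideanLin.trans LinearMap.toContinuousLinearMap)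
      (Matrix.diagonal v)) x : EuclideanSpace ℂ n)
      = Matrix.toEuclideanLin (Matrix.diagonal v) x := rfl
  rw [hval, Matrix.toEuclideanLin_apply]
  rw [EuclideanSpace.norm_eq, EuclideanSpace.norm_eq]
  have step1 : ∀ i, ‖((WithLp.equiv 2 (n → ℂ)).symm
      (Matrix.diagonal v *ᵥ (WithLp.equiv 2 (n → ℂ)) x)) i‖ ^ 2 ≤ c ^ 2 * ‖x i‖ ^ 2 := by
    intro i
    have : ((WithLp.equiv 2 (n → ℂ)).symm
        (Matrix.diagonal v *ᵥ (WithLp.equiv 2 (n → ℂ)) x)) i = v i * x i := by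
      simp [Matrix.mulVec_diagonal]
    rw [this, norm_mul, mul_pow]
    exact mul_le_mul_of_nonneg_right (pow_le_pow_left₀ (norm_nonneg _) (h i) 2) (sq_nonneg _)
  calc Real.sqrt (∑ i, ‖((WithLp.equiv 2 (n → ℂ)).symm
      (Matrix.diagonal v *ᵥ (WithLp.equiv 2 (n → ℂ)) x)) i‖ ^ 2)
      ≤ Real.sqrt (∑ i, c ^ 2 * ‖x i‖ ^ 2) :=
        Real.sqrt_le_sqrt (Finset.sum_le_sum fun i _ => step1 i)
    _ = c * Real.sqrt (∑ i, ‖x i‖ ^ 2) := by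
        rw [← Finset.mul_sum, Real.sqrt_mul (sq_nonneg c), Real.sqrt_sq hc]

lemma matrix_norm_fromRows_one_zero {a b : Type*} [Fintype a] [Fintype b]
    [DecidableEq a] [DecidableEq b] :
    ‖(Matrix.fromRows (1 : Matrix a a ℂ) (0 : Matrix b a ℂ))‖ ≤ 1 := by
  refine matrix_norm_le_of_sq_le zero_le_one ?_
  rw [Matrix.conjTranspose_fromRows_eq_fromCols_conjTranspose,
    Matrix.fromCols_mul_fromRows]
  simp only [Matrix.conjTranspose_one, Matrix.conjTranspose_zero, one_mul, zero_mul, mul_zero,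
    add_zero, mul_one]
  simpa using matrix_norm_one_le a

lemma matrix_norm_fromRows_zero_one {a b : Type*} [Fintype a] [Fintype b]
    [DecidableEq a] [DecidableEq b] :
    ‖(Matrix.fromRows (0 : Matrix a b ℂ) (1 : Matrix b b ℂ))‖ ≤ 1 := by
  refine matrix_norm_le_of_sq_le zero_le_one ?_
  rw [Matrix.conjTranspose_fromRows_eq_fromCols_conjTranspose,
    Matrix.fromCols_mul_fromRows]
  simp only [Matrix.conjTranspose_one, Matrix.conjTranspose_zero, one_mul, zero_mul, mul_zero,
    zero_add, mul_one]
  simpa using matrix_norm_one_le b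

lemma matrix_norm_fromCols_one_zero {a b : Type*} [Fintype a] [Fintype b]
    [DecidableEq a] [DecidableEq b] :
    ‖(Matrix.fromCols (1 : Matrix a a ℂ) (0 : Matrix a b ℂ))‖ ≤ 1 := by
  have : (Matrix.fromCols (1 : Matrix a a ℂ) (0 : Matrix a b ℂ))
      = (Matrix.fromRows (1 : Matrix a a ℂ) (0 : Matrix b a ℂ))ᴴ := by
    rw [Matrix.conjTranspose_fromRows_eq_fromCols_conjTranspose]
    simp
  rw [this, Matrix.l2_opNorm_conjTranspose]
  exact matrix_norm_fromRows_one_zero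

lemma matrix_norm_fromCols_zero_one {a b : Type*} [Fintype a] [Fintype b]
    [DecidableEq a] [DecidableEq b] :
    ‖(Matrix.fromCols (0 : Matrix b a ℂ) (1 : Matrix b b ℂ))‖ ≤ 1 := by
  have : (Matrix.fromCols (0 : Matrix b a ℂ) (1 : Matrix b b ℂ))
      = (Matrix.fromRows (0 : Matrix a b ℂ) (1 : Matrix b b ℂ))ᴴ := by
    rw [Matrix.conjTranspose_fromRows_eq_fromCols_conjTranspose]
    simp
  rw [this, Matrix.l2_opNorm_conjTranspose]
  exact matrix_norm_fromRows_zero_one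

lemma matrix_norm_block11_le {m n m' n' : Type*} [Fintype m] [Fintype n] [Fintype m'] [Fintype n']
    [DecidableEq m] [DecidableEq n] [DecidableEq m'] [DecidableEq n']
    (A : Matrix m n ℂ) (B : Matrix m n' ℂ) (C : Matrix m' n ℂ) (D : Matrix m' n' ℂ) :
    ‖A‖ ≤ ‖Matrix.fromBlocks A B C D‖ := by
  have hrep : A = (Matrix.fromCols (1 : Matrix m m ℂ) (0 : Matrix m m' ℂ)) *
      (Matrix.fromBlocks A B C D * Matrix.fromRows (1 : Matrix n n ℂ) (0 : Matrix n' n ℂ)) := by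
    rw [Matrix.fromBlocks_mul_fromRows, Matrix.fromCols_mul_fromRows]
    simp
  calc ‖A‖ = ‖(Matrix.fromCols (1 : Matrix m m ℂ) (0 : Matrix m m' ℂ)) *
      (Matrix.fromBlocks A B C D * Matrix.fromRows (1 : Matrix n n ℂ) (0 : Matrix n' n ℂ))‖ := by
        rw [← hrep]
    _ ≤ ‖(Matrix.fromCols (1 : Matrix m m ℂ) (0 : Matrix m m' ℂ))‖ *
        (‖Matrix.fromBlocks A B C D‖ * ‖Matrix.fromRows (1 : Matrix n n ℂ) (0 : Matrix n' n ℂ)‖) :=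
      (Matrix.l2_opNorm_mul _ _).trans (by
        exact mul_le_mul_of_nonneg_left (Matrix.l2_opNorm_mul _ _) (norm_nonneg _))
    _ ≤ 1 * (‖Matrix.fromBlocks A B C D‖ * 1) := by
        gcongr
        · exact matrix_norm_fromCols_one_zero
        · exact matrix_norm_fromRows_one_zero
    _ = ‖Matrix.fromBlocks A B C D‖ := by ring

lemma matrix_norm_block22_le {m n m' n' : Type*} [Fintype m] [Fintype n] [Fintype m'] [Fintype n']
    [DecidableEq m] [DecidableEq n] [DecidableEq m'] [DecidableEq n']
    (A : Matrix m n ℂ) (B : Matrix m n' ℂ) (C : Matrix m' n ℂ) (D : Matrix m' n' ℂ) :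
    ‖D‖ ≤ ‖Matrix.fromBlocks A B C D‖ := by
  have hrep : D = (Matrix.fromCols (0 : Matrix m' m ℂ) (1 : Matrix m' m' ℂ)) *
      (Matrix.fromBlocks A B C D * Matrix.fromRows (0 : Matrix n n' ℂ) (1 : Matrix n' n' ℂ)) := by
    rw [Matrix.fromBlocks_mul_fromRows, Matrix.fromCols_mul_fromRows]
    simp
  calc ‖D‖ = ‖(Matrix.fromCols (0 : Matrix m' m ℂ) (1 : Matrix m' m' ℂ)) *
      (Matrix.fromBlocks A B C D * Matrix.fromRows (0 : Matrix n n' ℂ) (1 : Matrix n' n' ℂ))‖ := by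
        rw [← hrep]
    _ ≤ ‖(Matrix.fromCols (0 : Matrix m' m ℂ) (1 : Matrix m' m' ℂ))‖ *
        (‖Matrix.fromBlocks A B C D‖ * ‖Matrix.fromRows (0 : Matrix n n' ℂ) (1 : Matrix n' n' ℂ)‖) :=
      (Matrix.l2_opNorm_mul _ _).trans (by
        exact mul_le_mul_of_nonneg_left (Matrix.l2_opNorm_mul _ _) (norm_nonneg _))
    _ ≤ 1 * (‖Matrix.fromBlocks A B C D‖ * 1) := by
        gcongr
        · exact matrix_norm_fromCols_zero_one
        · exact matrix_norm_fromRows_zero_one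
    _ = ‖Matrix.fromBlocks A B C D‖ := by ring

/-- A matrix `v` is a partial isometry if `v vᴴ v = v`. -/
def IsPartialIsometry {m n : Type*} [Fintype m] [Fintype n] (v : Matrix m n ℂ) : Prop :=
  v * vᴴ * v = v

set_option maxHeartbeats 2000000 in
/-- If `W = [[z₁, z₂],[z₃, z₄]]` is a partial isometry, `ε < 1/16`, `‖z₂‖ ≤ ε` and
`‖z₃‖ ≤ ε`, then `z₁` is 16ε-close to a partial isometry. -/
theorem stmt2 {m n m' n' : Type*} [Fintype m] [Fintype n] [Fintype m'] [Fintype n']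
    [DecidableEq n] [DecidableEq n']
    (z₁ : Matrix m n ℂ) (z₂ : Matrix m n' ℂ) (z₃ : Matrix m' n ℂ) (z₄ : Matrix m' n' ℂ)
    (ε : ℝ) (hε : ε < 1 / 16)
    (hW : IsPartialIsometry (Matrix.fromBlocks z₁ z₂ z₃ z₄))
    (h₂ : ‖z₂‖ ≤ ε) (h₃ : ‖z₃‖ ≤ ε) :
    ∃ w : Matrix m n ℂ, IsPartialIsometry w ∧ ‖z₁ - w‖ ≤ 16 * ε := by
  classical
  have hε0 : 0 ≤ ε := le_trans (norm_nonneg z₂) h₂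
  set W := Matrix.fromBlocks z₁ z₂ z₃ z₄ with hWdef
  have hWPI : W * Wᴴ * W = W := hW
  -- ‖W‖ ≤ 1
  have hWq : (Wᴴ * W) * (Wᴴ * W) = Wᴴ * W := by
    calc (Wᴴ * W) * (Wᴴ * W) = Wᴴ * (W * Wᴴ * W) := by simp only [Matrix.mul_assoc]
      _ = Wᴴ * W := by rw [hWPI]
  have hWn : ‖W‖ ≤ 1 := by
    have h1 : ‖Wᴴ * W‖ = ‖W‖ * ‖W‖ := Matrix.l2_opNorm_conjTranspose_mul_self W
    have h2 : ‖(Wᴴ * W)ᴴ * (Wᴴ * W)‖ = ‖Wᴴ * W‖ * ‖Wᴴ * W‖ :=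
      Matrix.l2_opNorm_conjTranspose_mul_self (Wᴴ * W)
    have h3 : (Wᴴ * W)ᴴ = Wᴴ * W := Matrix.isHermitian_conjTranspose_mul_self W
    rw [h3, hWq] at h2
    nlinarith [norm_nonneg W, norm_nonneg (Wᴴ * W), sq_nonneg (‖W‖ * ‖W‖ - 1),
      sq_nonneg (‖W‖ - 1), sq_nonneg (‖W‖ + 1)]
  have hz1 : ‖z₁‖ ≤ 1 := le_trans (matrix_norm_block11_le z₁ z₂ z₃ z₄) hWn
  have hz4 : ‖z₄‖ ≤ 1 := le_trans (matrix_norm_block22_le z₁ z₂ z₃ z₄) hWn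
  -- the key approximate identity
  set R := z₂ * z₂ᴴ * z₁ + z₁ * z₃ᴴ * z₃ + z₂ * z₄ᴴ * z₃ with hRdef
  have hkey : z₁ * z₁ᴴ * z₁ = z₁ - R := by
    have h0 : W * Wᴴ * W = W := hWPI
    rw [hWdef, Matrix.fromBlocks_conjTranspose, Matrix.fromBlocks_multiply,
      Matrix.fromBlocks_multiply] at h0
    have h11 := congrArg Matrix.toBlocks₁₁ h0
    simp only [Matrix.toBlocks_fromBlocks₁₁] at h11
    have expand : (z₁ * z₁ᴴ + z₂ * z₂ᴴ) * z₁ + (z₁ * z₃ᴴ + z₂ * z₄ᴴ) * z₃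
        = z₁ * z₁ᴴ * z₁ + R := by rw [hRdef]; simp only [Matrix.add_mul]; abel
    rw [expand] at h11
    exact eq_sub_of_add_eq h11
  have hRn : ‖R‖ ≤ 3 * ε ^ 2 := by
    have e2 : ‖z₂ᴴ‖ = ‖z₂‖ := Matrix.l2_opNorm_conjTranspose z₂
    have e3 : ‖z₃ᴴ‖ = ‖z₃‖ := Matrix.l2_opNorm_conjTranspose z₃
    have e4 : ‖z₄ᴴ‖ = ‖z₄‖ := Matrix.l2_opNorm_conjTranspose z₄
    have t1 := matrix_norm_mul3_le z₂ z₂ᴴ z₁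
    have t2 := matrix_norm_mul3_le z₁ z₃ᴴ z₃
    have t3 := matrix_norm_mul3_le z₂ z₄ᴴ z₃
    rw [e2] at t1; rw [e3] at t2; rw [e4] at t3
    have tri : ‖R‖ ≤ ‖z₂ * z₂ᴴ * z₁‖ + ‖z₁ * z₃ᴴ * z₃‖ + ‖z₂ * z₄ᴴ * z₃‖ := norm_add₃_le
    have b1 : ‖z₂‖ * ‖z₂‖ * ‖z₁‖ ≤ ε * ε * 1 := by gcongr <;> first | exact h₂ | exact hz1
    have b2 : ‖z₁‖ * ‖z₃‖ * ‖z₃‖ ≤ 1 * ε * ε := by gcongr <;> first | exact h₃ | exact hz1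
    have b3 : ‖z₂‖ * ‖z₄‖ * ‖z₃‖ ≤ ε * 1 * ε := by
      gcongr <;> first | exact h₂ | exact h₃ | exact hz4
    nlinarith
  -- eigenvalue analysis of p = z₁ᴴ * z₁
  have hp := Matrix.isHermitian_conjTranspose_mul_self z₁
  have hppE : (z₁ᴴ * z₁) * (z₁ᴴ * z₁) - z₁ᴴ * z₁ = -(z₁ᴴ * R) := by
    calc (z₁ᴴ * z₁) * (z₁ᴴ * z₁) - z₁ᴴ * z₁
        = z₁ᴴ * (z₁ * z₁ᴴ * z₁) - z₁ᴴ * z₁ := by simp only [Matrix.mul_assoc]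
      _ = z₁ᴴ * (z₁ - R) - z₁ᴴ * z₁ := by rw [hkey]
      _ = -(z₁ᴴ * R) := by rw [Matrix.mul_sub]; abel
  have hppn : ‖(z₁ᴴ * z₁) * (z₁ᴴ * z₁) - z₁ᴴ * z₁‖ ≤ 3 * ε ^ 2 := by
    rw [hppE, norm_neg]
    refine le_trans (Matrix.l2_opNorm_mul _ _) ?_
    rw [Matrix.l2_opNorm_conjTranspose]
    nlinarith [norm_nonneg z₁, norm_nonneg R]
  have hlam0 : ∀ i, 0 ≤ hp.eigenvalues i := fun i =>
    Matrix.eigenvalues_conjTranspose_mul_self_nonneg z₁ i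
  have heig : ∀ i, |hp.eigenvalues i ^ 2 - hp.eigenvalues i| ≤ 3 * ε ^ 2 := by
    intro i
    have hv1 : ‖hp.eigenvectorBasis i‖ = 1 := hp.eigenvectorBasis.orthonormal.1 i
    have hm1 : (z₁ᴴ * z₁) *ᵥ ⇑(hp.eigenvectorBasis i)
        = hp.eigenvalues i • ⇑(hp.eigenvectorBasis i) := hp.mulVec_eigenvectorBasis i
    have hm2 : ((z₁ᴴ * z₁) * (z₁ᴴ * z₁) - z₁ᴴ * z₁) *ᵥ ⇑(hp.eigenvectorBasis i)
        = (hp.eigenvalues i ^ 2 - hp.eigenvalues i) • ⇑(hp.eigenvectorBasis i) := by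
      rw [Matrix.sub_mulVec, ← Matrix.mulVec_mulVec, hm1, Matrix.mulVec_smul, hm1,
        smul_smul, sub_smul, sq]
    have hb := ((z₁ᴴ * z₁) * (z₁ᴴ * z₁) - z₁ᴴ * z₁).l2_opNorm_mulVec (hp.eigenvectorBasis i)
    rw [show ((z₁ᴴ * z₁) * (z₁ᴴ * z₁) - z₁ᴴ * z₁) *ᵥ (hp.eigenvectorBasis i : EuclideanSpace ℂ n)
        = (hp.eigenvalues i ^ 2 - hp.eigenvalues i) • ⇑(hp.eigenvectorBasis i) from hm2] at hb
    have hnorm : ‖(EuclideanSpace.equiv n ℂ).symm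
        ((hp.eigenvalues i ^ 2 - hp.eigenvalues i) • ⇑(hp.eigenvectorBasis i))‖
        = |hp.eigenvalues i ^ 2 - hp.eigenvalues i| := by
      have : (EuclideanSpace.equiv n ℂ).symm
          ((hp.eigenvalues i ^ 2 - hp.eigenvalues i) • ⇑(hp.eigenvectorBasis i))
          = (hp.eigenvalues i ^ 2 - hp.eigenvalues i) • hp.eigenvectorBasis i := rfl
      rw [this, norm_smul, hv1, mul_one, Real.norm_eq_abs]
    rw [hnorm, hv1, mul_one] at hb
    exact le_trans hb hppn
  have hgap : ∀ i, hp.eigenvalues i ≤ 6 * ε ^ 2 ∨ |hp.eigenvalues i - 1| ≤ 6 * ε ^ 2 := by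
    intro i
    rcases abs_le.mp (heig i) with ⟨hlo, hhi⟩
    by_cases hcs : hp.eigenvalues i ≤ 1 / 2
    · left; nlinarith [hlam0 i]
    · right
      push_neg at hcs
      rw [abs_le]
      constructor <;> nlinarith [hlam0 i]
  -- make the eigenvalue function opaque (to avoid motive issues)
  obtain ⟨lam, hlam⟩ : ∃ l : n → ℝ, l = hp.eigenvalues := ⟨_, rfl⟩
  rw [← hlam] at hlam0 hgap
  -- the eigenvector unitary
  have hU2 : (hp.eigenvectorUnitary : Matrix n n ℂ) * star (hp.eigenvectorUnitary : Matrix n n ℂ) = 1 :=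
    Matrix.mem_unitaryGroup_iff.mp hp.eigenvectorUnitary.2
  have hU1 : star (hp.eigenvectorUnitary : Matrix n n ℂ) * (hp.eigenvectorUnitary : Matrix n n ℂ) = 1 :=
    Matrix.mem_unitaryGroup_iff'.mp hp.eigenvectorUnitary.2
  set U : Matrix n n ℂ := (hp.eigenvectorUnitary : Matrix n n ℂ) with hUdef
  have hUn : ‖U‖ ≤ 1 := by
    refine matrix_norm_le_of_sq_le zero_le_one ?_
    rw [← Matrix.star_eq_conjTranspose, hU1]
    simpa using matrix_norm_one_le n
  have hUsn : ‖star U‖ ≤ 1 := by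
    rw [Matrix.star_eq_conjTranspose, Matrix.l2_opNorm_conjTranspose]; exact hUn
  have hcancel : ∀ X : Matrix n n ℂ, star U * (U * X) = X := by
    intro X; rw [← Matrix.mul_assoc, hU1, Matrix.one_mul]
  have hprod : ∀ a b : n → ℂ,
      (U * Matrix.diagonal a * star U) * (U * Matrix.diagonal b * star U)
      = U * Matrix.diagonal (fun i => a i * b i) * star U := by
    intro a b
    calc (U * Matrix.diagonal a * star U) * (U * Matrix.diagonal b * star U)
        = U * (Matrix.diagonal a * (star U * (U * (Matrix.diagonal b * star U)))) := by
          simp only [Matrix.mul_assoc]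
      _ = U * (Matrix.diagonal a * (Matrix.diagonal b * star U)) := by rw [hcancel]
      _ = U * (Matrix.diagonal a * Matrix.diagonal b * star U) := by
          simp only [Matrix.mul_assoc]
      _ = U * Matrix.diagonal (fun i => a i * b i) * star U := by
          rw [Matrix.diagonal_mul_diagonal, Matrix.mul_assoc]
  have hspec : z₁ᴴ * z₁ = U * Matrix.diagonal (fun i => (lam i : ℂ)) * star U := by
    rw [hlam]; exact hp.spectral_theorem
  -- self-adjointness of conjugated real diagonals
  have hsa : ∀ r : n → ℝ, (U * Matrix.diagonal (fun i => (r i : ℂ)) * star U)ᴴ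
      = U * Matrix.diagonal (fun i => (r i : ℂ)) * star U := by
    intro r
    have hDH : (Matrix.diagonal (fun i => (r i : ℂ)))ᴴ = Matrix.diagonal (fun i => (r i : ℂ)) := by
      have hstar : (star fun i => ((r i : ℝ) : ℂ)) = fun i => ((r i : ℝ) : ℂ) := by
        funext i
        exact Complex.conj_ofReal _
      rw [Matrix.diagonal_conjTranspose, hstar]
    calc (U * Matrix.diagonal (fun i => (r i : ℂ)) * star U)ᴴ
        = (star U)ᴴ * ((Matrix.diagonal (fun i => (r i : ℂ)))ᴴ * Uᴴ) := by
          rw [Matrix.conjTranspose_mul, Matrix.conjTranspose_mul]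
      _ = U * (Matrix.diagonal (fun i => (r i : ℂ)) * star U) := by
          rw [hDH, ← Matrix.star_eq_conjTranspose, ← Matrix.star_eq_conjTranspose, star_star]
      _ = U * Matrix.diagonal (fun i => (r i : ℂ)) * star U := by rw [Matrix.mul_assoc]
  -- cutoff function
  set c : n → ℝ := fun i => if lam i ≤ 6 * ε ^ 2 then 0
    else (Real.sqrt (lam i))⁻¹ with hcdef
  refine ⟨z₁ * (U * Matrix.diagonal (fun i => (c i : ℂ)) * star U), ?_, ?_⟩
  · -- partial isometry
    show z₁ * (U * Matrix.diagonal (fun i => (c i : ℂ)) * star U) *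
        (z₁ * (U * Matrix.diagonal (fun i => (c i : ℂ)) * star U))ᴴ *
        (z₁ * (U * Matrix.diagonal (fun i => (c i : ℂ)) * star U))
        = z₁ * (U * Matrix.diagonal (fun i => (c i : ℂ)) * star U)
    rw [Matrix.conjTranspose_mul, hsa c]
    calc z₁ * (U * Matrix.diagonal (fun i => (c i : ℂ)) * star U) *
        ((U * Matrix.diagonal (fun i => (c i : ℂ)) * star U) * z₁ᴴ) *
        (z₁ * (U * Matrix.diagonal (fun i => (c i : ℂ)) * star U))
        = z₁ * ((U * Matrix.diagonal (fun i => (c i : ℂ)) * star U) *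
            (U * Matrix.diagonal (fun i => (c i : ℂ)) * star U) * (z₁ᴴ * z₁) *
            (U * Matrix.diagonal (fun i => (c i : ℂ)) * star U)) := by
          simp only [Matrix.mul_assoc]
      _ = z₁ * (U * Matrix.diagonal (fun i => (c i : ℂ) * (c i : ℂ) *
            (lam i : ℂ) * (c i : ℂ)) * star U) := by
          rw [hprod, hspec, hprod, hprod]
      _ = z₁ * (U * Matrix.diagonal (fun i => (c i : ℂ)) * star U) := by
          have : (fun i => (c i : ℂ) * (c i : ℂ) * (lam i : ℂ) * (c i : ℂ))
              = fun i => (c i : ℂ) := by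
            funext i
            by_cases hcase : lam i ≤ 6 * ε ^ 2
            · have hc0 : c i = 0 := by rw [hcdef]; simp [hcase]
              rw [hc0]; push_cast; ring
            · have hgt : 6 * ε ^ 2 < lam i := lt_of_not_ge hcase
              have hpos : 0 < lam i := lt_of_le_of_lt (by positivity) hgt
              have hcv : c i = (Real.sqrt (lam i))⁻¹ := by rw [hcdef]; simp [hcase]
              have hs0 : 0 < Real.sqrt (lam i) := Real.sqrt_pos.mpr hpos
              have hss : Real.sqrt (lam i) * Real.sqrt (lam i)
                  = lam i := Real.mul_self_sqrt hpos.le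
              have hreal : c i * c i * lam i * c i = c i := by
                rw [hcv, ← hss]; field_simp; rw [Real.sqrt_sq hs0.le]
              calc (c i : ℂ) * (c i : ℂ) * (lam i : ℂ) * (c i : ℂ)
                  = ((c i * c i * lam i * c i : ℝ) : ℂ) := by push_cast; ring
                _ = (c i : ℂ) := by rw [hreal]
          rw [this]
  · -- the norm estimate
    have hsub : z₁ - z₁ * (U * Matrix.diagonal (fun i => (c i : ℂ)) * star U)
        = z₁ * (U * Matrix.diagonal (fun i => ((1 - c i : ℝ) : ℂ)) * star U) := by
      have hd : Matrix.diagonal (fun i => ((1 - c i : ℝ) : ℂ))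
          = 1 - Matrix.diagonal (fun i => (c i : ℂ)) := by
        rw [← Matrix.diagonal_one, Matrix.diagonal_sub]
        congr 1; funext i; push_cast; ring
      rw [hd, Matrix.mul_sub, Matrix.mul_one, Matrix.sub_mul, hU2, Matrix.mul_sub,
        Matrix.mul_one]
    have hq : (z₁ * (U * Matrix.diagonal (fun i => ((1 - c i : ℝ) : ℂ)) * star U))ᴴ *
        (z₁ * (U * Matrix.diagonal (fun i => ((1 - c i : ℝ) : ℂ)) * star U))
        = U * Matrix.diagonal (fun i => ((1 - c i : ℝ) : ℂ) * (lam i : ℂ) *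
            ((1 - c i : ℝ) : ℂ)) * star U := by
      rw [Matrix.conjTranspose_mul, hsa (fun i => 1 - c i)]
      calc (U * Matrix.diagonal (fun i => ((1 - c i : ℝ) : ℂ)) * star U) * z₁ᴴ *
          (z₁ * (U * Matrix.diagonal (fun i => ((1 - c i : ℝ) : ℂ)) * star U))
          = (U * Matrix.diagonal (fun i => ((1 - c i : ℝ) : ℂ)) * star U) * (z₁ᴴ * z₁) *
            (U * Matrix.diagonal (fun i => ((1 - c i : ℝ) : ℂ)) * star U) := by
            simp only [Matrix.mul_assoc]
        _ = U * Matrix.diagonal (fun i => ((1 - c i : ℝ) : ℂ) * (lam i : ℂ) *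
              ((1 - c i : ℝ) : ℂ)) * star U := by
            rw [hspec, hprod, hprod]
    have hentry : ∀ i, ‖((1 - c i : ℝ) : ℂ) * (lam i : ℂ) * ((1 - c i : ℝ) : ℂ)‖
        ≤ 6 * ε ^ 2 := by
      intro i
      have hcast : ((1 - c i : ℝ) : ℂ) * (lam i : ℂ) * ((1 - c i : ℝ) : ℂ)
          = (((1 - c i) * lam i * (1 - c i) : ℝ) : ℂ) := by push_cast; ring
      rw [hcast, Complex.norm_real, Real.norm_eq_abs]
      by_cases hcase : lam i ≤ 6 * ε ^ 2
      · have hc0 : c i = 0 := by rw [hcdef]; simp [hcase]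
        rw [hc0]
        simpa [abs_of_nonneg (hlam0 i)] using hcase
      · have hgt : 6 * ε ^ 2 < lam i := lt_of_not_ge hcase
        have hpos : 0 < lam i := lt_of_le_of_lt (by positivity) hgt
        have hone : |lam i - 1| ≤ 6 * ε ^ 2 := (hgap i).resolve_left hcase
        have hcv : c i = (Real.sqrt (lam i))⁻¹ := by rw [hcdef]; simp [hcase]
        have hs0 : 0 < Real.sqrt (lam i) := Real.sqrt_pos.mpr hpos
        have hss : Real.sqrt (lam i) * Real.sqrt (lam i)
            = lam i := Real.mul_self_sqrt hpos.le
        have hval : (1 - c i) * lam i * (1 - c i)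
            = (Real.sqrt (lam i) - 1) ^ 2 := by
          rw [hcv, ← hss]; field_simp; rw [Real.sqrt_sq hs0.le]
        rw [hval, abs_of_nonneg (sq_nonneg _)]
        have hge1 : 1 ≤ (Real.sqrt (lam i) + 1) ^ 2 := by nlinarith
        have h1 : (Real.sqrt (lam i) - 1) ^ 2 ≤ (lam i - 1) ^ 2 := by
          calc (Real.sqrt (lam i) - 1) ^ 2
              = (Real.sqrt (lam i) - 1) ^ 2 * 1 := by ring
            _ ≤ (Real.sqrt (lam i) - 1) ^ 2 *
                (Real.sqrt (lam i) + 1) ^ 2 :=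
              mul_le_mul_of_nonneg_left hge1 (sq_nonneg _)
            _ = (lam i - 1) ^ 2 := by
                linear_combination (Real.sqrt (lam i) * Real.sqrt (lam i) + lam i - 2) * hss
        have h2 : (lam i - 1) ^ 2 ≤ (6 * ε ^ 2) ^ 2 := by
          rcases abs_le.mp hone with ⟨hl, hr⟩; nlinarith
        nlinarith [sq_nonneg ε, mul_nonneg hε0 hε0]
    refine matrix_norm_le_of_sq_le (mul_nonneg (by norm_num) hε0) ?_
    rw [hsub, hq]
    have hdiagn : ‖Matrix.diagonal (fun i => ((1 - c i : ℝ) : ℂ) * (lam i : ℂ) *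
        ((1 - c i : ℝ) : ℂ))‖ ≤ 6 * ε ^ 2 := by
      refine matrix_diag_norm_le _ (by positivity) ?_
      intro i
      exact hentry i
    calc ‖U * Matrix.diagonal (fun i => ((1 - c i : ℝ) : ℂ) * (lam i : ℂ) *
        ((1 - c i : ℝ) : ℂ)) * star U‖
        ≤ ‖U‖ * ‖Matrix.diagonal (fun i => ((1 - c i : ℝ) : ℂ) * (lam i : ℂ) *
            ((1 - c i : ℝ) : ℂ))‖ * ‖star U‖ := matrix_norm_mul3_le _ _ _
      _ ≤ 1 * (6 * ε ^ 2) * 1 := by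
          gcongr <;> first | exact hUn | exact hdiagn | exact hUsn
      _ ≤ (16 * ε) ^ 2 := by nlinarith
end

section
/- Let P be a complex matrix which is an orthogonal projection (P = Pᴴ and P² = P), written in 2×2 block form P = [[P₁₁, P₁₂],[P₂₁, P₂₂]] where P₁₁ is m×m and P₂₂ is n×n. Then ‖P₁₁ − P₁₁²‖ = ‖P₁₂‖². -/
open Matrix
open scoped Matrix.Norms.L2Operator

/-- If `P` is an orthogonal projection written in 2×2 block form, then
`‖P₁₁ − P₁₁²‖ = ‖P₁₂‖²`. -/
theorem stmt3 {m n : Type*} [Fintype m] [Fintype n] [DecidableEq m] [DecidableEq n]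
    (P : Matrix (m ⊕ n) (m ⊕ n) ℂ)
    (hsa : Pᴴ = P) (hidem : P * P = P) :
    ‖P.toBlocks₁₁ - P.toBlocks₁₁ * P.toBlocks₁₁‖ = ‖P.toBlocks₁₂‖ ^ 2 := by
  set A := P.toBlocks₁₁ with hA
  set B := P.toBlocks₁₂ with hB
  set C := P.toBlocks₂₁ with hC
  set D := P.toBlocks₂₂ with hD
  have hP : P = fromBlocks A B C D := (fromBlocks_toBlocks P).symm
  have hidem' : fromBlocks (A * A + B * C) (A * B + B * D) (C * A + D * C)
      (C * B + D * D) = fromBlocks A B C D := by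
    rw [← fromBlocks_multiply, ← hP, hidem]
  have h11 : A * A + B * C = A := by
    have := congrArg Matrix.toBlocks₁₁ hidem'
    simpa [Matrix.toBlocks_fromBlocks₁₁] using this
  have hCB : C = Bᴴ := by
    ext i j
    have := congrFun (congrFun hsa (Sum.inr i)) (Sum.inl j)
    simpa [hC, hB, Matrix.toBlocks₂₁, Matrix.toBlocks₁₂, Matrix.conjTranspose_apply] using this.symm
  have key : A - A * A = B * Bᴴ := by
    rw [← hCB]
    linear_combination (norm := noncomm_ring) -h11
  rw [key]
  have : B * Bᴴ = (Bᴴ)ᴴ * Bᴴ := by rw [conjTranspose_conjTranspose]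
  rw [this, Matrix.l2_opNorm_conjTranspose_mul_self, Matrix.l2_opNorm_conjTranspose, sq]
end

section
/- If u and v are m×n complex matrices which are both partial isometries and ‖u − v‖ < 1, then rank u = rank v. -/
open Matrix
open scoped Matrix.Norms.L2Operator

private lemma rank_le_aux {m n : Type*} [Fintype m] [Fintype n] [DecidableEq n]
    (u v : Matrix m n ℂ) (hu : IsPartialIsometry u) (hv : IsPartialIsometry v)
    (h : ‖u - v‖ < 1) : u.rank ≤ v.rank := by
  by_contra hcon
  have hlt : v.rank < u.rank := Nat.lt_of_not_le hcon
  set P : Matrix n n ℂ := uᴴ * u with hP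
  have hPP : P * P = P := by
    rw [hP]
    conv_lhs => rw [Matrix.mul_assoc, ← Matrix.mul_assoc u uᴴ u, hu]
  set R : Submodule ℂ (n → ℂ) := LinearMap.range P.mulVecLin with hRdef
  set K : Submodule ℂ (n → ℂ) := LinearMap.ker v.mulVecLin with hKdef
  have hR : Module.finrank ℂ R = u.rank := by
    open scoped ComplexOrder in
    rw [← Matrix.rank_conjTranspose_mul_self u]; rfl
  have hK : v.rank + Module.finrank ℂ K = Fintype.card n := by
    have := LinearMap.finrank_range_add_finrank_ker v.mulVecLin
    simpa [Matrix.rank] using this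
  have hsup := Submodule.finrank_sup_add_finrank_inf_eq R K
  have hle : Module.finrank ℂ ↥(R ⊔ K) ≤ Fintype.card n := by
    have := Submodule.finrank_le (R ⊔ K)
    simpa using this
  have hpos : 0 < Module.finrank ℂ ↥(R ⊓ K) := by omega
  have hnebot : R ⊓ K ≠ ⊥ := by
    intro hbot
    rw [hbot, finrank_bot] at hpos
    omega
  obtain ⟨x, hxmem, hx0⟩ := Submodule.exists_mem_ne_zero_of_ne_bot hnebot
  have hxR : x ∈ R := hxmem.1
  have hxK : v *ᵥ x = 0 := hxmem.2
  obtain ⟨y, hy⟩ := hxR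
  have hPx : P *ᵥ x = x := by
    have : P.mulVecLin y = P *ᵥ y := rfl
    rw [← hy, this, Matrix.mulVec_mulVec, hPP]
  -- move to Euclidean space
  set X : EuclideanSpace ℂ n := (WithLp.equiv 2 (n → ℂ)).symm x with hX
  set U : EuclideanSpace ℂ m := (WithLp.equiv 2 (m → ℂ)).symm (u *ᵥ x) with hU
  have hinner : star (u *ᵥ x) ⬝ᵥ (u *ᵥ x) = star x ⬝ᵥ x := by
    rw [star_mulVec, ← Matrix.dotProduct_mulVec, Matrix.mulVec_mulVec, ← hP, hPx]
  have hUX : ‖U‖ = ‖X‖ := by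
    have h1 : (inner ℂ U U : ℂ) = inner ℂ X X := by
      rw [hU, hX, WithLp.equiv_symm_apply, WithLp.equiv_symm_apply, EuclideanSpace.inner_toLp_toLp, EuclideanSpace.inner_toLp_toLp,
        dotProduct_comm, dotProduct_comm x, hinner]
    rw [inner_self_eq_norm_sq_to_K, inner_self_eq_norm_sq_to_K] at h1
    have h2 : ‖U‖ ^ 2 = ‖X‖ ^ 2 := by exact_mod_cast h1
    nlinarith [norm_nonneg U, norm_nonneg X]
  have hXpos : 0 < ‖X‖ := by
    rw [norm_pos_iff]
    simpa [hX] using hx0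
  have hb : ‖(EuclideanSpace.equiv m ℂ).symm ((u - v) *ᵥ x)‖ ≤ ‖u - v‖ * ‖X‖ :=
    (u - v).l2_opNorm_mulVec X
  have hsub : (u - v) *ᵥ x = u *ᵥ x := by
    rw [Matrix.sub_mulVec, hxK, sub_zero]
  rw [hsub] at hb
  have hbU : ‖U‖ ≤ ‖u - v‖ * ‖X‖ := hb
  have : ‖u - v‖ * ‖X‖ < 1 * ‖X‖ := by
    exact mul_lt_mul_of_pos_right h hXpos
  rw [one_mul] at this
  linarith [hUX ▸ hbU]

/-- Partial isometries at distance less than 1 have equal rank. -/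
theorem stmt10 {m n : Type*} [Fintype m] [Fintype n] [DecidableEq n]
    (u v : Matrix m n ℂ) (hu : IsPartialIsometry u) (hv : IsPartialIsometry v)
    (h : ‖u - v‖ < 1) :
    u.rank = v.rank := by
  refine le_antisymm (rank_le_aux u v hu hv h) (rank_le_aux v u hv hu ?_)
  rwa [norm_sub_rev] at h
end
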